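/- Let E := EuclideanSpace ℝ (Fin 3) and let φ : E → ℝ be cone-smooth, i.e. φ(y) = f(y) + ‖y‖·g(y) for all y with f, g : E → ℝ of class C^∞. Then the function y ↦ ∫₀¹ φ(t • y) dt is cone-smooth: there exist C^∞ functions f₁, g₁ : E → ℝ with ∫₀¹ φ(t • y) dt = f₁(y) + ‖y‖·g₁(y) for all y ∈ E. -/

import Mathlib

set_option synthInstance.maxHeartbeats 1000000
set_option maxHeartbeats 1000000
open MeasureTheory intervalIntegral Set

noncomputable abbrev E3 := EuclideanSpace ℝ (Fin 3)

lemma aux_contDiff_param (n : ℕ) :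
    ∀ {G : Type} [NormedAddCommGroup G] [NormedSpace ℝ G] [CompleteSpace G]
      (F : E3 × ℝ → G), ContDiff ℝ (⊤ : ℕ∞) F →
      ContDiff ℝ (n : WithTop ℕ∞) (fun x : E3 => ∫ t in (0:ℝ)..1, F (x, t)) := by
  induction n with
  | zero =>
    intro G _ _ _ F hF
    rw [show ((0:ℕ) : WithTop ℕ∞) = 0 from rfl, contDiff_zero]
    exact intervalIntegral.continuous_parametric_intervalIntegral_of_continuous'
      (f := fun x t => F (x, t)) (by exact hF.continuous) 0 1
  | succ n IH =>
    intro G _ _ _ F hF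
    set F' : E3 × ℝ → (E3 →L[ℝ] G) :=
      fun p => (fderiv ℝ F p).comp (ContinuousLinearMap.inl ℝ E3 ℝ) with hF'def
    have hF' : ContDiff ℝ (⊤ : ℕ∞) F' :=
      (hF.fderiv_right (le_of_eq ENat.coe_top_add_one)).clm_comp contDiff_const
    have key : ∀ x₀ : E3, HasFDerivAt (fun x : E3 => ∫ t in (0:ℝ)..1, F (x, t))
        (∫ t in (0:ℝ)..1, F' (x₀, t)) x₀ := by
      intro x₀
      obtain ⟨C, hC⟩ := ((isCompact_closedBall x₀ 1).prod (isCompact_uIcc (a := (0:ℝ)) (b := 1))).exists_bound_of_continuousOn hF'.continuous.continuousOn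
      apply intervalIntegral.hasFDerivAt_integral_of_dominated_of_fderiv_le
        (F' := fun x t => F' (x, t)) (bound := fun _ => C) (s := Metric.ball x₀ 1) (Metric.ball_mem_nhds x₀ one_pos)
      · exact Filter.Eventually.of_forall fun x =>
          (hF.continuous.comp (continuous_const.prodMk continuous_id)).aestronglyMeasurable
      · exact (hF.continuous.comp (continuous_const.prodMk continuous_id)).intervalIntegrable 0 1
      · exact (hF'.continuous.comp (continuous_const.prodMk continuous_id)).aestronglyMeasurable
      · exact Filter.Eventually.of_forall fun t ht x hx =>
          hC (x, t) ⟨Metric.ball_subset_closedBall hx, Set.uIoc_subset_uIcc ht⟩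
      · exact intervalIntegrable_const
      · refine Filter.Eventually.of_forall fun t ht x hx => ?_
        have h1 : HasFDerivAt F (fderiv ℝ F (x, t)) (x, t) :=
          (hF.differentiable (by simp) (x, t)).hasFDerivAt
        have h2 : HasFDerivAt (fun x : E3 => (x, t)) (ContinuousLinearMap.inl ℝ E3 ℝ) x :=
          HasFDerivAt.prodMk (hasFDerivAt_id x) (hasFDerivAt_const t x)
        exact h1.comp x h2
    have hdiff : Differentiable ℝ (fun x : E3 => ∫ t in (0:ℝ)..1, F (x, t)) :=
      fun x => (key x).differentiableAt
    have heq : fderiv ℝ (fun x : E3 => ∫ t in (0:ℝ)..1, F (x, t)) =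
        fun x₀ => ∫ t in (0:ℝ)..1, F' (x₀, t) := funext fun x => (key x).fderiv
    rw [show ((n + 1 : ℕ) : WithTop ℕ∞) = (n : WithTop ℕ∞) + 1 by push_cast; ring, contDiff_succ_iff_fderiv]
    refine ⟨hdiff, by simp, ?_⟩
    rw [heq]
    exact IH F' hF'

/-- Lemma A.2 (ii), k = ∞: for cone-smooth `φ`, the radial average
`y ↦ ∫₀¹ φ(t • y) dt` (i.e. `r⁻¹ ∫₀^r φ`) is cone-smooth. -/
theorem cone_smooth_radial_average (φ : EuclideanSpace ℝ (Fin 3) → ℝ)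
    (f g : EuclideanSpace ℝ (Fin 3) → ℝ)
    (hf : ContDiff ℝ (⊤ : ℕ∞) f) (hg : ContDiff ℝ (⊤ : ℕ∞) g)
    (hφ : ∀ y : EuclideanSpace ℝ (Fin 3), φ y = f y + ‖y‖ * g y) :
    ∃ f₁ g₁ : EuclideanSpace ℝ (Fin 3) → ℝ,
      ContDiff ℝ (⊤ : ℕ∞) f₁ ∧ ContDiff ℝ (⊤ : ℕ∞) g₁ ∧
      ∀ y : EuclideanSpace ℝ (Fin 3),
        (∫ t in (0 : ℝ)..1, φ (t • y)) = f₁ y + ‖y‖ * g₁ y := by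
  have hsmul : ContDiff ℝ (⊤ : ℕ∞) (fun p : E3 × ℝ => p.2 • p.1) :=
    contDiff_snd.smul contDiff_fst
  refine ⟨fun y => ∫ t in (0:ℝ)..1, f (t • y),
    fun y => ∫ t in (0:ℝ)..1, t * g (t • y), ?_, ?_, ?_⟩
  · rw [contDiff_infty]
    intro n
    exact aux_contDiff_param n (fun p => f (p.2 • p.1)) (hf.comp hsmul)
  · rw [contDiff_infty]
    intro n
    exact aux_contDiff_param n (fun p => p.2 * g (p.2 • p.1))
      (contDiff_snd.mul (hg.comp hsmul))
  · intro y
    have h1 : ∀ t ∈ Set.uIcc (0:ℝ) 1,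
        φ (t • y) = f (t • y) + ‖y‖ * (t * g (t • y)) := by
      intro t ht
      rw [Set.uIcc_of_le (by norm_num : (0:ℝ) ≤ 1)] at ht
      rw [hφ, norm_smul, Real.norm_of_nonneg ht.1]
      ring
    rw [intervalIntegral.integral_congr h1, intervalIntegral.integral_add,
      intervalIntegral.integral_const_mul]
    · exact ((hf.continuous.comp ((continuous_id.smul continuous_const) :
        Continuous fun t : ℝ => t • y))).intervalIntegrable 0 1
    · exact (continuous_const.mul (continuous_id.mul
        (hg.continuous.comp (continuous_id.smul continuous_const)))).intervalIntegrable 0 1
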